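/- Let K ⊂ ℝⁿ, n ≥ 7, be a symmetric star body of revolution with ψ_K bounded and ψ_K(t) = O(1/t) as t → ∞. Define ψ_{IK}(x) = ∫₀^{1/x} ψ_K(t)^{n−1}(1 − x²t²)^{(n−4)/2} dt for x > 0 and ψ_{IK}(0) = ∫₀^∞ ψ_K(t)^{n−1} dt. Then ψ_{IK} is twice differentiable at 0 (with ψ_{IK} extended evenly) and ψ_{IK}''(0) = −(n−4)∫₀^∞ ψ_K(t)^{n−1} t² dt. -/

import Mathlib

open Real Set MeasureTheory

/-- `ψ_{IK}`, extended evenly: `ψ_{IK}(0) = ∫₀^∞ ψ(t)^{n−1} dt` and for `x ≠ 0`,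
`ψ_{IK}(x) = ∫₀^{1/|x|} ψ(t)^{n−1}(1 − x²t²)^{(n−4)/2} dt`. -/
noncomputable def psiIK (n : ℕ) (ψ : ℝ → ℝ) (x : ℝ) : ℝ :=
  if x = 0 then ∫ t in Set.Ioi (0 : ℝ), ψ t ^ (n - 1)
  else ∫ t in Set.Ioo (0 : ℝ) (1 / |x|),
        ψ t ^ (n - 1) * (1 - x ^ 2 * t ^ 2) ^ (((n : ℝ) - 4) / 2)

open Filter Topology

/-- The profile function `G v = (max v 0)^α`. -/
noncomputable def maxRpow (α : ℝ) (v : ℝ) : ℝ := max v 0 ^ α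

lemma hasDerivAt_maxRpow {α : ℝ} (hα : 1 < α) (v : ℝ) :
    HasDerivAt (maxRpow α) (α * max v 0 ^ (α - 1)) v := by
  have hα0 : α ≠ 0 := by positivity
  have hα1 : α - 1 ≠ 0 := by intro h; apply absurd hα; simp [sub_eq_zero] at h; simp [h]
  rcases lt_trichotomy v 0 with hv | hv | hv
  · have hmax : max v 0 = 0 := max_eq_right hv.le
    have hev : maxRpow α =ᶠ[𝓝 v] fun _ => (0:ℝ) := by
      filter_upwards [eventually_lt_nhds hv] with w hw
      simp [maxRpow, max_eq_right hw.le, Real.zero_rpow hα0]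
    have := (hasDerivAt_const v (0:ℝ)).congr_of_eventuallyEq hev
    simpa [hmax, Real.zero_rpow hα1] using this
  · subst hv
    rw [hasDerivAt_iff_tendsto_slope]
    have hval : maxRpow α 0 = 0 := by simp [maxRpow, Real.zero_rpow hα0]
    have hres : α * max (0:ℝ) 0 ^ (α - 1) = 0 := by
      simp [Real.zero_rpow hα1]
    rw [hres]
    apply squeeze_zero_norm' (a := fun y : ℝ => |y| ^ (α - 1))
    · filter_upwards [self_mem_nhdsWithin] with y hy
      have hy0 : y ≠ 0 := hy
      rcases lt_or_gt_of_ne hy0 with hyneg | hypos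
      · have : maxRpow α y = 0 := by
          simp [maxRpow, max_eq_right hyneg.le, Real.zero_rpow hα0]
        simp [slope_def_field, this, hval]
        positivity
      · have hmy : max y 0 = y := max_eq_left hypos.le
        have : slope (maxRpow α) 0 y = y ^ (α - 1) := by
          rw [slope_def_field, hval, maxRpow, sub_zero, sub_zero, hmy, div_eq_iff hy0,
            ← Real.rpow_add_one hy0]
          norm_num
        rw [this, Real.norm_eq_abs, abs_of_nonneg (Real.rpow_nonneg hypos.le _),
          abs_of_pos hypos]
    · have hc : ContinuousAt (fun y : ℝ => |y| ^ (α - 1)) 0 :=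
        continuous_abs.continuousAt.rpow_const (Or.inr (by linarith))
      have := hc.tendsto
      simp only [abs_zero, Real.zero_rpow hα1] at this
      exact this.mono_left nhdsWithin_le_nhds
  · have hmax : max v 0 = v := max_eq_left hv.le
    have hev : maxRpow α =ᶠ[𝓝 v] fun w => w ^ α := by
      filter_upwards [eventually_gt_nhds hv] with w hw
      simp [maxRpow, max_eq_left hw.le]
    have h := Real.hasDerivAt_rpow_const (x := v) (p := α) (Or.inl hv.ne')
    have := h.congr_of_eventuallyEq hev
    simpa [hmax] using this

/-- `g(u) = (1-u²)₊^α`. -/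
noncomputable def gfun (α : ℝ) (u : ℝ) : ℝ := max (1 - u ^ 2) 0 ^ α

/-- `q(u) = g'(u)/u = -2α (1-u²)₊^(α-1)`. -/
noncomputable def qfun (α : ℝ) (u : ℝ) : ℝ := -(2 * α) * max (1 - u ^ 2) 0 ^ (α - 1)

lemma hasDerivAt_gfun {α : ℝ} (hα : 1 < α) (u : ℝ) :
    HasDerivAt (gfun α) (u * qfun α u) u := by
  have h1 : HasDerivAt (fun u : ℝ => 1 - u ^ 2) (-(2 * u)) u := by
    simpa using ((hasDerivAt_pow 2 u).const_sub 1)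
  have := (hasDerivAt_maxRpow hα (1 - u ^ 2)).comp u h1
  refine this.congr_deriv ?_
  simp only [qfun]; ring

lemma max_one_sub_sq_nonneg (u : ℝ) : 0 ≤ max (1 - u ^ 2) 0 := le_max_right _ _

lemma max_one_sub_sq_le_one (u : ℝ) : max (1 - u ^ 2) 0 ≤ 1 := by
  apply max_le _ zero_le_one; nlinarith [sq_nonneg u]

lemma maxRpow_le_one {β : ℝ} (hβ : 0 ≤ β) (u : ℝ) : max (1 - u ^ 2) 0 ^ β ≤ 1 :=
  Real.rpow_le_one (max_one_sub_sq_nonneg u) (max_one_sub_sq_le_one u) hβ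

lemma abs_qfun_le {α : ℝ} (hα : 1 < α) (u : ℝ) : |qfun α u| ≤ 2 * α := by
  have h0 : (0:ℝ) ≤ 2 * α := by linarith
  rw [qfun, abs_mul, abs_neg, abs_of_nonneg h0,
    abs_of_nonneg (Real.rpow_nonneg (max_one_sub_sq_nonneg u) _)]
  calc 2 * α * max (1 - u ^ 2) 0 ^ (α - 1) ≤ 2 * α * 1 := by
        gcongr; exact maxRpow_le_one (by linarith) u
    _ = 2 * α := by ring

lemma abs_mul_qfun_le {α : ℝ} (hα : 1 < α) (u : ℝ) : |u * qfun α u| ≤ 2 * α := by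
  rcases le_or_gt (|u|) 1 with h | h
  · rw [abs_mul]
    calc |u| * |qfun α u| ≤ 1 * (2 * α) := by
          exact mul_le_mul h (abs_qfun_le hα u) (abs_nonneg _) zero_le_one
      _ = 2 * α := by ring
  · have hu2 : 1 - u ^ 2 ≤ 0 := by nlinarith [sq_abs u]
    have hα1 : α - 1 ≠ 0 := by intro hh; apply absurd hα; simp [sub_eq_zero] at hh; simp [hh]
    have : qfun α u = 0 := by
      rw [qfun, max_eq_right hu2, Real.zero_rpow hα1, mul_zero]
    rw [this, mul_zero, abs_zero]; linarith

lemma continuous_maxRpow_comp {β : ℝ} (hβ : 0 ≤ β) :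
    Continuous (fun u : ℝ => max (1 - u ^ 2) 0 ^ β) := by
  rw [continuous_iff_continuousAt]
  intro u
  exact ((continuous_const.sub (continuous_pow 2)).max continuous_const).continuousAt.rpow_const
    (Or.inr hβ)

lemma continuous_gfun {α : ℝ} (hα : 1 < α) : Continuous (gfun α) :=
  continuous_maxRpow_comp (by linarith)

lemma continuous_qfun {α : ℝ} (hα : 1 < α) : Continuous (qfun α) :=
  continuous_const.mul (continuous_maxRpow_comp (by linarith))

lemma qfun_zero {α : ℝ} : qfun α 0 = -(2 * α) := by
  simp [qfun]

lemma gfun_zero {α : ℝ} : gfun α 0 = 1 := by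
  simp [gfun]

lemma abs_gfun_le {α : ℝ} (hα : 1 < α) (u : ℝ) : |gfun α u| ≤ 1 := by
  rw [gfun, abs_of_nonneg (Real.rpow_nonneg (max_one_sub_sq_nonneg u) _)]
  exact maxRpow_le_one (by linarith) u

lemma psi_pow_int (n : ℕ) (hn : 7 ≤ n) (ψ : ℝ → ℝ)
    (hψ_cont : Continuous ψ) (hψ_nonneg : ∀ t, 0 ≤ ψ t)
    (C : ℝ) (hC : ∀ t : ℝ, 1 ≤ t → ψ t ≤ C / t) (k : ℕ) (hk : k ≤ 2) :
    IntegrableOn (fun t => ψ t ^ (n - 1) * t ^ k) (Ioi (0:ℝ)) := by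
  have hcont : Continuous (fun t => ψ t ^ (n - 1) * t ^ k) :=
    (hψ_cont.pow _).mul (continuous_pow k)
  have h1 : IntegrableOn (fun t => ψ t ^ (n - 1) * t ^ k) (Ioc (0:ℝ) 1) :=
    hcont.integrableOn_Ioc
  have hC0 : 0 ≤ C := by
    have := hC 1 le_rfl
    have := hψ_nonneg 1
    simp at *; linarith
  have hexp : (k:ℝ) + (1 - n) < -1 := by
    have hk2 : (k:ℝ) ≤ 2 := by exact_mod_cast hk
    have hn7 : (7:ℝ) ≤ n := by exact_mod_cast hn
    linarith
  have hbint : IntegrableOn (fun t : ℝ => C ^ (n - 1) * t ^ ((k:ℝ) + (1 - n))) (Ioi 1) :=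
    (integrableOn_Ioi_rpow_of_lt hexp one_pos).const_mul _
  have h2 : IntegrableOn (fun t => ψ t ^ (n - 1) * t ^ k) (Ioi (1:ℝ)) := by
    apply Integrable.mono' hbint (hcont.aestronglyMeasurable.restrict)
    rw [ae_restrict_iff' measurableSet_Ioi]
    refine ae_of_all _ fun t ht => ?_
    have ht1 : (1:ℝ) < t := ht
    have ht0 : (0:ℝ) < t := by linarith
    have hle : ψ t ^ (n - 1) ≤ (C / t) ^ (n - 1) :=
      pow_le_pow_left₀ (hψ_nonneg t) (hC t ht1.le) _
    have hnn : (0:ℝ) ≤ ψ t ^ (n - 1) * t ^ k :=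
      mul_nonneg (pow_nonneg (hψ_nonneg t) _) (pow_nonneg ht0.le _)
    rw [Real.norm_eq_abs, abs_of_nonneg hnn]
    calc ψ t ^ (n - 1) * t ^ k ≤ (C / t) ^ (n - 1) * t ^ k :=
          mul_le_mul_of_nonneg_right hle (pow_nonneg ht0.le k)
      _ = C ^ (n - 1) * t ^ ((k:ℝ) + (1 - n)) := by
          rw [div_pow, Real.rpow_add ht0, Real.rpow_natCast]
          have hcast : ((n - 1 : ℕ) : ℝ) = (n:ℝ) - 1 := by
            have : 1 ≤ n := by omega
            push_cast [this]; ring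
          have htpow : t ^ ((1:ℝ) - n) = (t ^ (n - 1 : ℕ))⁻¹ := by
            rw [← Real.rpow_natCast t (n-1), hcast, ← Real.rpow_neg ht0.le]
            norm_num
          rw [htpow]
          field_simp
  have : Ioc (0:ℝ) 1 ∪ Ioi 1 = Ioi 0 := Ioc_union_Ioi_eq_Ioi zero_le_one
  rw [← this]
  exact h1.union h2

lemma psiIK_eq (n : ℕ) (hn : 7 ≤ n) (ψ : ℝ → ℝ)
    (hψ_cont : Continuous ψ) (hψ_nonneg : ∀ t, 0 ≤ ψ t)
    (C : ℝ) (hC : ∀ t : ℝ, 1 ≤ t → ψ t ≤ C / t) (x : ℝ) :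
    psiIK n ψ x = ∫ t in Ioi (0:ℝ), ψ t ^ (n - 1) * gfun (((n:ℝ) - 4) / 2) (x * t) := by
  set α : ℝ := ((n:ℝ) - 4) / 2 with hα_def
  have hα : 1 < α := by
    have hn7 : (7:ℝ) ≤ n := by exact_mod_cast hn
    rw [hα_def]; linarith
  have hα0 : α ≠ 0 := by positivity
  rcases eq_or_ne x 0 with rfl | hx
  · simp only [psiIK, if_true, reduceIte]
    congr 1
    funext t
    simp [gfun_zero]
  · rw [psiIK, if_neg hx]
    set a : ℝ := 1 / |x| with ha_def
    have hx0 : 0 < |x| := abs_pos.2 hx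
    have ha : 0 < a := by positivity
    -- integrability of the full integrand on Ioi 0
    have hbase : IntegrableOn (fun t => ψ t ^ (n - 1) * t ^ 0) (Ioi (0:ℝ)) :=
      psi_pow_int n hn ψ hψ_cont hψ_nonneg C hC 0 (by norm_num)
    have hcontf : Continuous (fun t => ψ t ^ (n - 1) * gfun α (x * t)) :=
      (hψ_cont.pow _).mul ((continuous_gfun hα).comp (continuous_const.mul continuous_id))
    have hint : IntegrableOn (fun t => ψ t ^ (n - 1) * gfun α (x * t)) (Ioi (0:ℝ)) := by
      apply Integrable.mono' hbase hcontf.aestronglyMeasurable.restrict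
      rw [ae_restrict_iff' measurableSet_Ioi]
      refine ae_of_all _ fun t ht => ?_
      rw [Real.norm_eq_abs, abs_mul, abs_of_nonneg (pow_nonneg (hψ_nonneg t) _), pow_zero,
        mul_one]
      calc ψ t ^ (n - 1) * |gfun α (x * t)| ≤ ψ t ^ (n - 1) * 1 :=
            mul_le_mul_of_nonneg_left (abs_gfun_le hα _) (pow_nonneg (hψ_nonneg t) _)
        _ = ψ t ^ (n - 1) := mul_one _
    have hsplit : Ioo (0:ℝ) a ∪ Ici a = Ioi 0 := Ioo_union_Ici_eq_Ioi ha
    have hdisj : Disjoint (Ioo (0:ℝ) a) (Ici a) :=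
      (Iio_disjoint_Ici le_rfl).mono_left Ioo_subset_Iio_self
    rw [← hsplit, setIntegral_union hdisj measurableSet_Ici
      (hint.mono_set (by rw [← hsplit]; exact subset_union_left))
      (hint.mono_set (by rw [← hsplit]; exact subset_union_right))]
    have hzero : ∫ t in Ici a, ψ t ^ (n - 1) * gfun α (x * t) = 0 := by
      apply setIntegral_eq_zero_of_forall_eq_zero
      intro t ht
      have hta : a ≤ t := ht
      have h1 : 1 ≤ |x| * t := by
        rw [ha_def] at hta
        rw [div_le_iff₀ hx0] at hta
        linarith [hta]
      have hsq : 1 ≤ x ^ 2 * t ^ 2 := by nlinarith [sq_abs x]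
      have : gfun α (x * t) = 0 := by
        rw [gfun, mul_pow, max_eq_right (by linarith), Real.zero_rpow hα0]
      rw [this, mul_zero]
    rw [hzero, add_zero]
    apply setIntegral_congr_fun measurableSet_Ioo
    intro t ht
    have ht0 : 0 < t := ht.1
    have hta : t < a := ht.2
    have h1 : |x| * t < 1 := by
      rw [ha_def, lt_div_iff₀ hx0] at hta
      linarith
    have hsq : x ^ 2 * t ^ 2 < 1 := by nlinarith [sq_abs x, mul_nonneg hx0.le ht0.le]
    have : gfun α (x * t) = (1 - x ^ 2 * t ^ 2) ^ α := by
      rw [gfun, mul_pow, max_eq_left (by linarith)]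
    simp only [this]
    rfl

/-- For `n ≥ 7` and `ψ = ψ_K` bounded with `ψ(t) = O(1/t)` at infinity, the function
`ψ_{IK}` is twice differentiable at `0` and
`ψ_{IK}''(0) = −(n−4) ∫₀^∞ ψ(t)^{n−1} t² dt`. -/
theorem psiIK_second_derivative (n : ℕ) (hn : 7 ≤ n) (ψ : ℝ → ℝ)
    (hψ_cont : Continuous ψ) (hψ_nonneg : ∀ t, 0 ≤ ψ t)
    (M : ℝ) (hM : ∀ t, ψ t ≤ M)
    (C : ℝ) (hC : ∀ t : ℝ, 1 ≤ t → ψ t ≤ C / t) :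
    DifferentiableAt ℝ (deriv (psiIK n ψ)) 0 ∧
      deriv (deriv (psiIK n ψ)) 0
        = -((n : ℝ) - 4) * ∫ t in Set.Ioi (0 : ℝ), ψ t ^ (n - 1) * t ^ 2 := by
  set α : ℝ := ((n:ℝ) - 4) / 2 with hα_def
  have hn7 : (7:ℝ) ≤ n := by exact_mod_cast hn
  have hα : 1 < α := by rw [hα_def]; linarith
  have hbase : ∀ k : ℕ, k ≤ 2 → IntegrableOn (fun t => ψ t ^ (n-1) * t ^ k) (Ioi (0:ℝ)) :=
    fun k hk => psi_pow_int n hn ψ hψ_cont hψ_nonneg C hC k hk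
  have hψm : Continuous fun t => ψ t ^ (n-1) := hψ_cont.pow _
  have hrepr : psiIK n ψ = fun x => ∫ t in Ioi (0:ℝ), ψ t ^ (n-1) * gfun α (x*t) :=
    funext (psiIK_eq n hn ψ hψ_cont hψ_nonneg C hC)
  set Fd : ℝ → ℝ → ℝ := fun x t => ψ t ^ (n-1) * ((x * t * qfun α (x * t)) * t) with hFd_def
  have hcontq : Continuous (qfun α) := continuous_qfun hα
  have hcontg : Continuous (gfun α) := continuous_gfun hα
  have hFcont : ∀ x : ℝ, Continuous fun t => ψ t ^ (n-1) * gfun α (x*t) := fun x =>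
    hψm.mul (hcontg.comp (continuous_const.mul continuous_id))
  have hFdcont : ∀ x : ℝ, Continuous (Fd x) := fun x => by
    apply hψm.mul
    exact (((continuous_const.mul continuous_id).mul
      (hcontq.comp (continuous_const.mul continuous_id))).mul continuous_id)
  have hFint : ∀ x : ℝ, IntegrableOn (fun t => ψ t ^ (n-1) * gfun α (x*t)) (Ioi (0:ℝ)) := by
    intro x
    apply Integrable.mono' (hbase 0 (by norm_num)) (hFcont x).aestronglyMeasurable.restrict
    refine ae_of_all _ fun t => ?_
    rw [Real.norm_eq_abs, abs_mul, abs_of_nonneg (pow_nonneg (hψ_nonneg t) _), pow_zero, mul_one]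
    calc ψ t ^ (n-1) * |gfun α (x*t)| ≤ ψ t ^ (n-1) * 1 :=
          mul_le_mul_of_nonneg_left (abs_gfun_le hα _) (pow_nonneg (hψ_nonneg t) _)
      _ = ψ t ^ (n-1) := mul_one _
  have hbound1 : Integrable (fun t => ψ t ^ (n-1) * t * (2*α)) (volume.restrict (Ioi 0)) := by
    have := (hbase 1 (by norm_num)).mul_const (2*α)
    simpa [pow_one] using this
  have hD : ∀ x₀ : ℝ, HasDerivAt (fun x => ∫ t in Ioi (0:ℝ), ψ t ^ (n-1) * gfun α (x*t))
      (∫ t in Ioi (0:ℝ), Fd x₀ t) x₀ := by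
    intro x₀
    have key := hasDerivAt_integral_of_dominated_loc_of_deriv_le (μ := volume.restrict (Ioi 0))
      (F := fun x t => ψ t ^ (n-1) * gfun α (x*t)) (F' := Fd) (x₀ := x₀)
      (bound := fun t => ψ t ^ (n-1) * t * (2*α)) (Metric.ball_mem_nhds x₀ one_pos)
      (Eventually.of_forall fun x => (hFcont x).aestronglyMeasurable.restrict)
      (hFint x₀)
      ((hFdcont x₀).aestronglyMeasurable.restrict)
      ?_ hbound1 ?_
    · exact key.2
    · rw [ae_restrict_iff' measurableSet_Ioi]
      refine ae_of_all _ fun t ht x hx => ?_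
      have ht0 : (0:ℝ) < t := ht
      rw [hFd_def]
      rw [Real.norm_eq_abs, abs_mul, abs_of_nonneg (pow_nonneg (hψ_nonneg t) _), abs_mul,
        abs_of_pos ht0]
      calc ψ t ^ (n-1) * (|x * t * qfun α (x * t)| * t)
          ≤ ψ t ^ (n-1) * ((2*α) * t) := by
            apply mul_le_mul_of_nonneg_left _ (pow_nonneg (hψ_nonneg t) _)
            exact mul_le_mul_of_nonneg_right (abs_mul_qfun_le hα _) ht0.le
        _ = ψ t ^ (n-1) * t * (2*α) := by ring
    · refine ae_of_all _ fun t x hx => ?_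
      have h := ((hasDerivAt_gfun hα (x*t)).comp x (hasDerivAt_mul_const t)).const_mul
        (ψ t ^ (n-1))
      simpa [Function.comp, hFd_def] using h
  have hderivAt : ∀ x : ℝ, HasDerivAt (psiIK n ψ) (∫ t in Ioi (0:ℝ), Fd x t) x := by
    rw [hrepr]; exact hD
  have hderiv_eq : deriv (psiIK n ψ) = fun x => ∫ t in Ioi (0:ℝ), Fd x t :=
    funext fun x => (hderivAt x).deriv
  set L : ℝ := ∫ t in Ioi (0:ℝ), (ψ t ^ (n-1) * t^2) * (-(2*α)) with hL_def
  set S : ℝ → ℝ := fun x => ∫ t in Ioi (0:ℝ), (ψ t ^ (n-1) * t^2) * qfun α (x*t) with hS_def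
  have hSmeas : ∀ x : ℝ, AEStronglyMeasurable (fun t => (ψ t ^ (n-1) * t^2) * qfun α (x*t))
      (volume.restrict (Ioi 0)) := fun x =>
    ((hψm.mul (continuous_pow 2)).mul
      (hcontq.comp (continuous_const.mul continuous_id))).aestronglyMeasurable.restrict
  have hbound2 : Integrable (fun t => (ψ t ^ (n-1) * t^2) * (2*α)) (volume.restrict (Ioi 0)) :=
    (hbase 2 le_rfl).mul_const _
  have hS_tendsto : Tendsto S (𝓝[≠] (0:ℝ)) (𝓝 L) := by
    rw [hL_def, hS_def]
    apply tendsto_integral_filter_of_dominated_convergence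
      (bound := fun t => (ψ t ^ (n-1) * t^2) * (2*α))
      (Eventually.of_forall hSmeas) ?_ hbound2 ?_
    · refine Eventually.of_forall fun x => ae_of_all _ fun t => ?_
      rw [Real.norm_eq_abs, abs_mul,
        abs_of_nonneg (mul_nonneg (pow_nonneg (hψ_nonneg t) _) (sq_nonneg t))]
      exact mul_le_mul_of_nonneg_left (abs_qfun_le hα _)
        (mul_nonneg (pow_nonneg (hψ_nonneg t) _) (sq_nonneg t))
    · refine ae_of_all _ fun t => ?_
      have hq : Tendsto (fun x : ℝ => qfun α (x*t)) (𝓝[≠] (0:ℝ)) (𝓝 (-(2*α))) := by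
        have hc : ContinuousAt (fun x : ℝ => qfun α (x*t)) 0 :=
          (hcontq.comp (continuous_mul_right t)).continuousAt
        have := hc.tendsto
        simp only [zero_mul, qfun_zero] at this
        exact this.mono_left nhdsWithin_le_nhds
      exact hq.const_mul (ψ t ^ (n-1) * t^2)
  have hD0 : HasDerivAt (fun x => ∫ t in Ioi (0:ℝ), Fd x t) L 0 := by
    rw [hasDerivAt_iff_tendsto_slope]
    have heq : S =ᶠ[𝓝[≠] (0:ℝ)] slope (fun x => ∫ t in Ioi (0:ℝ), Fd x t) 0 := by
      filter_upwards [self_mem_nhdsWithin] with x hx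
      have hx0 : x ≠ 0 := hx
      have hD0val : (∫ t in Ioi (0:ℝ), Fd 0 t) = 0 := by
        simp [hFd_def]
      have hDx : (∫ t in Ioi (0:ℝ), Fd x t) = S x * x := by
        rw [hS_def, ← integral_mul_const]
        refine integral_congr_ae (ae_of_all _ fun t => ?_)
        rw [hFd_def]; ring
      rw [slope_def_field, hD0val, sub_zero, sub_zero, hDx, mul_div_assoc, div_self hx0,
        mul_one]
    exact hS_tendsto.congr' heq
  constructor
  · rw [hderiv_eq]; exact hD0.differentiableAt
  · rw [hderiv_eq, hD0.deriv, hL_def, integral_mul_const, hα_def]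
    ring
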